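/- arXiv:1211.2367 — 2 statements merged into one kernel-verified Lean document; each statement's English description precedes it below -/
import Mathlib

section
/- Let (L₁, …, L_{k−1}, V_{G_k}; w₁, …, w_k) be a k-level vertex hierarchy on the weighted graph G = (V, w₁), and let s, t ∈ V be such that Anc(s) ∩ V_{G_k} = ∅ or Anc(t) ∩ V_{G_k} = ∅. Then no shortest walk from s to t contains a vertex of V_{G_k}; that is, every walk p from s to t in w₁ whose length equals dist_G(s,t) contains no vertex of V_{G_k}. -/
namespace ISLabel

variable {V : Type*}

/-- Two vertices are adjacent in the weighted graph `w` when they are distinct and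
joined by an edge of finite weight. -/
def Adj (w : V → V → ℕ∞) (u v : V) : Prop := u ≠ v ∧ w u v < ⊤

/-- `p` is a walk from `u` to `v` in the weighted graph `w`: a nonempty list of
vertices starting at `u`, ending at `v`, with consecutive vertices adjacent. -/
def IsWalk (w : V → V → ℕ∞) (u v : V) (p : List V) : Prop :=
  p ≠ [] ∧ p.head? = some u ∧ p.getLast? = some v ∧ p.Chain' (Adj w)

/-- The length of a list of vertices: the sum of `f` over consecutive pairs. -/
def pathLen (f : V → V → ℕ∞) (p : List V) : ℕ∞ :=
  ((p.zip p.tail).map fun e => f e.1 e.2).sum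

/-- The distance from `u` to `v` in `w`: the infimum of the lengths of all walks
from `u` to `v` (`⊤` if there is no such walk). -/
noncomputable def wdist (w : V → V → ℕ∞) (u v : V) : ℕ∞ :=
  ⨅ p : {p : List V // IsWalk w u v p}, pathLen w p.1

/-- `I` is an independent set in `w`. -/
def IsIndep (w : V → V → ℕ∞) (I : Set V) : Prop :=
  ∀ u ∈ I, ∀ v ∈ I, ¬ Adj w u v

/-- `w` is a weighted undirected graph: symmetric, and every off-diagonal value is
either `⊤` (no edge) or a weight `≥ 1`. -/
def IsWGraph (w : V → V → ℕ∞) : Prop :=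
  (∀ u v, w u v = w v u) ∧ ∀ u v, u ≠ v → 1 ≤ w u v

/-- `w` is supported on `S`: all weights touching a vertex outside `S` are `⊤`. -/
def SupportedOn (w : V → V → ℕ∞) (S : Set V) : Prop :=
  ∀ u v, u ∉ S ∨ v ∉ S → w u v = ⊤

/-- `VsetOf L i` is the vertex set `V_i = V ∖ (L₁ ∪ … ∪ L_{i-1})`. -/
def VsetOf (L : ℕ → Set V) (i : ℕ) : Set V := {v | ∀ j, 1 ≤ j → j < i → v ∉ L j}

/-- A `k`-level vertex hierarchy (`k ≥ 2`) on the weighted graph `w 1`: like a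
vertex hierarchy of height `k`, except that the top vertex set
`V_{G_k} = VsetOf L k` is not required to be independent in `w k`. -/
structure KLevelHierarchy (V : Type*) (k : ℕ) where
  L : ℕ → Set V
  w : ℕ → V → V → ℕ∞
  two_le : 2 ≤ k
  wgraph : ∀ i, 1 ≤ i → i ≤ k → IsWGraph (w i)
  disj : ∀ i j, 1 ≤ i → i < k → 1 ≤ j → j < k → i ≠ j → ∀ v, v ∈ L i → v ∉ L j
  supported : ∀ i, 1 ≤ i → i ≤ k → SupportedOn (w i) (VsetOf L i)
  aug : ∀ i, 2 ≤ i → i ≤ k → ∀ u v : V, u ≠ v → u ∈ VsetOf L i → v ∈ VsetOf L i →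
    w i u v = min (w (i - 1) u v) (⨅ x ∈ L (i - 1), w (i - 1) u x + w (i - 1) x v)
  indep : ∀ i, 1 ≤ i → i < k → IsIndep (w i) (L i)

/-- The level of a vertex: the unique `i < k` with `v ∈ L i`, and `k` for vertices
of the top vertex set `V_{G_k}`. -/
noncomputable def klevel {k : ℕ} (H : KLevelHierarchy V k) (v : V) : ℕ :=
  sInf {i | (1 ≤ i ∧ i < k ∧ v ∈ H.L i) ∨ i = k}

/-- One step of an ascending sequence in a `k`-level vertex hierarchy. -/
def kAscStep {k : ℕ} (H : KLevelHierarchy V k) (a b : V) : Prop :=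
  klevel H a < klevel H b ∧ Adj (H.w (klevel H a)) a b

/-- `p` is an ascending sequence from `v` to `u`. -/
def kIsAscending {k : ℕ} (H : KLevelHierarchy V k) (v u : V) (p : List V) : Prop :=
  p ≠ [] ∧ p.head? = some v ∧ p.getLast? = some u ∧ p.Chain' (kAscStep H)

/-- The set of ancestors of `v`. -/
def kAnc {k : ℕ} (H : KLevelHierarchy V k) (v : V) : Set V :=
  {u | ∃ p, kIsAscending H v u p}

/-- `d(v,u)` in a `k`-level vertex hierarchy. -/
noncomputable def kAncDist {k : ℕ} (H : KLevelHierarchy V k) (v u : V) : ℕ∞ :=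
  ⨅ p : {p : List V // kIsAscending H v u p},
    pathLen (fun a b => H.w (klevel H a) a b) p.1

section Aux

variable {k : ℕ}

lemma not_mem_L_of_mem_VsetOf {L : ℕ → Set V} {v : V} {i j : ℕ} (h1 : 1 ≤ j) (h2 : j < i)
    (hv : v ∈ VsetOf L i) : v ∉ L j := hv j h1 h2

lemma mem_VsetOf_of_le {L : ℕ → Set V} {v : V} {i j : ℕ} (h : i ≤ j)
    (hv : v ∈ VsetOf L j) : v ∈ VsetOf L i := fun m h1 h2 => hv m h1 (h2.trans_le h)

lemma mem_VsetOf_one {L : ℕ → Set V} (v : V) : v ∈ VsetOf L 1 :=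
  fun _ h1 h2 => absurd (h2.trans_le h1) (lt_irrefl _)

lemma mem_VsetOf_succ {L : ℕ → Set V} {c : V} {i : ℕ} (hci : c ∈ VsetOf L i)
    (hc : c ∉ L i) : c ∈ VsetOf L (i + 1) := by
  intro j hj1 hj2
  rcases Nat.lt_or_ge j i with h | h
  · exact hci j hj1 h
  · have : j = i := by omega
    rwa [this]

lemma klevel_eq_of_mem (H : KLevelHierarchy V k) {i : ℕ} {v : V} (h1 : 1 ≤ i) (h2 : i < k)
    (hL : v ∈ H.L i) (hV : v ∈ VsetOf H.L i) : klevel H v = i := by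
  apply le_antisymm
  · exact Nat.sInf_le (Or.inl ⟨h1, h2, hL⟩)
  · apply le_csInf ⟨k, Or.inr rfl⟩
    rintro j (⟨hj1, hjk, hjL⟩ | rfl)
    · by_contra hlt
      exact hV j hj1 (by omega) hjL
    · omega

lemma le_klevel_of_mem (H : KLevelHierarchy V k) {i : ℕ} {v : V} (hik : i ≤ k)
    (hV : v ∈ VsetOf H.L i) : i ≤ klevel H v := by
  apply le_csInf ⟨k, Or.inr rfl⟩
  rintro j (⟨hj1, _, hjL⟩ | rfl)
  · by_contra hlt
    exact hV j hj1 (by omega) hjL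
  · exact hik

lemma mem_of_adj (H : KLevelHierarchy V k) {i : ℕ} (h1 : 1 ≤ i) (hk : i ≤ k) {u v : V}
    (h : Adj (H.w i) u v) : u ∈ VsetOf H.L i ∧ v ∈ VsetOf H.L i := by
  by_contra hc
  have hor : u ∉ VsetOf H.L i ∨ v ∉ VsetOf H.L i := by tauto
  have := H.supported i h1 hk u v hor
  exact absurd (this ▸ h.2) (lt_irrefl _)

lemma adj_up (H : KLevelHierarchy V k) {i : ℕ} (h1 : 1 ≤ i) (hk : i + 1 ≤ k) {u v : V}
    (hu : u ∈ VsetOf H.L (i + 1)) (hv : v ∈ VsetOf H.L (i + 1))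
    (h : Adj (H.w i) u v) : Adj (H.w (i + 1)) u v := by
  refine ⟨h.1, ?_⟩
  have haug := H.aug (i + 1) (by omega) hk u v h.1 hu hv
  simp only [Nat.add_sub_cancel] at haug
  calc H.w (i + 1) u v ≤ H.w i u v := by rw [haug]; exact min_le_left _ _
    _ < ⊤ := h.2

lemma adj_aug (H : KLevelHierarchy V k) {i : ℕ} (h1 : 1 ≤ i) (hk : i + 1 ≤ k) {u x v : V}
    (hu : u ∈ VsetOf H.L (i + 1)) (hv : v ∈ VsetOf H.L (i + 1)) (hx : x ∈ H.L i)
    (huv : u ≠ v) (h1 : Adj (H.w i) u x) (h2 : Adj (H.w i) x v) :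
    Adj (H.w (i + 1)) u v := by
  refine ⟨huv, ?_⟩
  have haug := H.aug (i + 1) (by omega) hk u v huv hu hv
  simp only [Nat.add_sub_cancel] at haug
  have hle : H.w (i + 1) u v ≤ H.w i u x + H.w i x v := by
    rw [haug]
    exact (min_le_right _ _).trans (iInf₂_le x hx)
  exact hle.trans_lt (WithTop.add_lt_top.2 ⟨h1.2, h2.2⟩)

lemma proj (H : KLevelHierarchy V k) {i : ℕ} (h1 : 1 ≤ i) (hk : i + 1 ≤ k) {b : V}
    (hb : b ∈ VsetOf H.L (i + 1)) :
    ∀ {a : V}, Relation.ReflTransGen (Adj (H.w i)) a b →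
      (a ∈ VsetOf H.L (i + 1) → Relation.ReflTransGen (Adj (H.w (i + 1))) a b) ∧
      (a ∈ H.L i → ∀ e, e ∈ VsetOf H.L (i + 1) → Adj (H.w i) e a →
        Relation.ReflTransGen (Adj (H.w (i + 1))) e b) := by
  intro a h
  induction h using Relation.ReflTransGen.head_induction_on with
  | refl =>
    refine ⟨fun _ => .refl, fun hbL e _ _ => ?_⟩
    exact absurd hbL (hb i h1 (by omega))
  | head h' hcb ih =>
    rename_i a c
    have hcVi : c ∈ VsetOf H.L i := (mem_of_adj H h1 (by omega) h').2
    constructor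
    · intro haV
      by_cases hcL : c ∈ H.L i
      · exact ih.2 hcL a haV h'
      · have hcV1 : c ∈ VsetOf H.L (i + 1) := mem_VsetOf_succ hcVi hcL
        exact (ih.1 hcV1).head (adj_up H h1 hk haV hcV1 h')
    · intro haL e heV he
      have hcL : c ∉ H.L i := fun hc => H.indep i h1 (by omega) a haL c hc h'
      have hcV1 : c ∈ VsetOf H.L (i + 1) := mem_VsetOf_succ hcVi hcL
      by_cases hec : e = c
      · exact hec ▸ ih.1 hcV1
      · exact (ih.1 hcV1).head (adj_aug H h1 hk heV hcV1 haL hec he h')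

lemma anc_of_rtg (H : KLevelHierarchy V k) {s u : V}
    (h : Relation.ReflTransGen (kAscStep H) s u) : u ∈ kAnc H s := by
  induction h with
  | refl => exact ⟨[s], by simp, rfl, rfl, List.isChain_singleton s⟩
  | tail hab hstep ih =>
    obtain ⟨q, hq0, hqh, hql, hqc⟩ := ih
    rename_i b u
    refine ⟨q ++ [u], by simp, ?_, ?_, ?_⟩
    · rcases q with _ | ⟨c, q'⟩
      · exact absurd rfl hq0
      · simpa using hqh
    · simp
    · unfold List.Chain'
      rw [List.isChain_append]
      refine ⟨hqc, List.isChain_singleton u, fun x hx y hy => ?_⟩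
      rw [hql] at hx
      simp only [Option.mem_def, Option.some.injEq, List.head?_cons] at hx hy
      subst hx
      subst hy
      exact hstep

lemma rtg_of_head_chain {w : V → V → ℕ∞} {v : V} :
    ∀ {p : List V} {u : V}, p.head? = some u → p.Chain' (Adj w) → v ∈ p →
      Relation.ReflTransGen (Adj w) u v := by
  intro p
  induction p with
  | nil => intro u hh _ _; simp at hh
  | cons a q ih =>
    intro u hh hc hv
    have hau : a = u := by simpa using hh
    subst hau
    rcases List.mem_cons.1 hv with rfl | hv
    · exact .refl
    · rcases q with _ | ⟨b, q'⟩
      · simp at hv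
      · unfold List.Chain' at hc
        rw [List.isChain_cons_cons] at hc
        exact Relation.ReflTransGen.head hc.1 (ih rfl hc.2 hv)

lemma ascend (H : KLevelHierarchy V k) {x : V} (hx : x ∈ VsetOf H.L k) (s : V) :
    ∀ n, 1 + n ≤ k →
      Relation.ReflTransGen (Adj (H.w 1)) s x →
      ∃ s', Relation.ReflTransGen (kAscStep H) s s' ∧ s' ∈ VsetOf H.L (1 + n) ∧
        Relation.ReflTransGen (Adj (H.w (1 + n))) s' x := by
  intro n
  induction n with
  | zero => exact fun _ hw => ⟨s, .refl, mem_VsetOf_one s, hw⟩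
  | succ m ih =>
    intro hmk hw
    obtain ⟨s', hanc, hsV, hw'⟩ := ih (by omega) hw
    set i := 1 + m with hi
    have hik : i + 1 ≤ k := by omega
    have hgoal : 1 + (m + 1) = i + 1 := by omega
    rw [hgoal]
    have hxV : x ∈ VsetOf H.L (i + 1) := mem_VsetOf_of_le hik hx
    by_cases hsL : s' ∈ H.L i
    · have hsx : s' ≠ x := fun h => (hxV i (by omega) (by omega)) (h ▸ hsL)
      rcases hw'.cases_head with h | ⟨y, hyadj, hyw⟩
      · exact absurd h hsx
      · have hyVi : y ∈ VsetOf H.L i := (mem_of_adj H (by omega) (by omega) hyadj).2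
        have hyL : y ∉ H.L i := fun hy => H.indep i (by omega) (by omega) s' hsL y hy hyadj
        have hyV1 : y ∈ VsetOf H.L (i + 1) := mem_VsetOf_succ hyVi hyL
        have hlv : klevel H s' = i := klevel_eq_of_mem H (by omega) (by omega) hsL hsV
        have hstep : kAscStep H s' y := by
          refine ⟨?_, ?_⟩
          · rw [hlv]
            exact lt_of_lt_of_le (by omega) (le_klevel_of_mem H hik hyV1)
          · rw [hlv]
            exact hyadj
        exact ⟨y, hanc.tail hstep, hyV1, (proj H (by omega) hik hxV hyw).1 hyV1⟩
    · have hsV1 : s' ∈ VsetOf H.L (i + 1) := mem_VsetOf_succ hsV hsL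
      exact ⟨s', hanc, hsV1, (proj H (by omega) hik hxV hw').1 hsV1⟩

lemma anc_top (H : KLevelHierarchy V k) {s x : V} (hx : x ∈ VsetOf H.L k)
    (hw : Relation.ReflTransGen (Adj (H.w 1)) s x) :
    (kAnc H s ∩ VsetOf H.L k).Nonempty := by
  obtain ⟨s', hanc, hsV, -⟩ := ascend H hx s (k - 1) (by have := H.two_le; omega) hw
  have hk : 1 + (k - 1) = k := by have := H.two_le; omega
  rw [hk] at hsV
  exact ⟨s', anc_of_rtg H hanc, hsV⟩

end Aux

/-- for Type-1 queries, no shortest walk meets the top vertex set. -/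
theorem klevel_shortest_avoids_top [Fintype V] {k : ℕ} (H : KLevelHierarchy V k)
    (s t : V)
    (hdisj : kAnc H s ∩ VsetOf H.L k = ∅ ∨ kAnc H t ∩ VsetOf H.L k = ∅) :
    ∀ p : List V, IsWalk (H.w 1) s t p → pathLen (H.w 1) p = wdist (H.w 1) s t →
      ∀ v ∈ p, v ∉ VsetOf H.L k := by
  intro p hp _ v hv hvk
  obtain ⟨hne, hhead, hlast, hchain⟩ := hp
  rcases hdisj with hd | hd
  · have h1 : Relation.ReflTransGen (Adj (H.w 1)) s v := rtg_of_head_chain hhead hchain hv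
    obtain ⟨z, hz⟩ := anc_top H hvk h1
    rw [hd] at hz
    exact hz
  · have hsym : ∀ a b, Adj (H.w 1) a b → Adj (H.w 1) b a := by
      intro a b h
      exact ⟨h.1.symm, by rw [(H.wgraph 1 le_rfl (by have := H.two_le; omega)).1 b a]; exact h.2⟩
    have hhead' : p.reverse.head? = some t := by rw [List.head?_reverse]; exact hlast
    have hchain' : p.reverse.Chain' (Adj (H.w 1)) :=
      (List.isChain_reverse).2 (List.IsChain.imp (fun a b h => hsym a b h) hchain)
    have h1 : Relation.ReflTransGen (Adj (H.w 1)) t v :=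
      rtg_of_head_chain hhead' hchain' (List.mem_reverse.2 hv)
    obtain ⟨z, hz⟩ := anc_top H hvk h1
    rw [hd] at hz
    exact hz

end ISLabel
end

section
/- Let (L₁, …, L_h; w₁, …, w_h) be a vertex hierarchy of height h on the weighted graph G = (V, w₁), let s, t ∈ V with dist_G(s,t) < ⊤, let p be a walk from s to t in w₁ whose length equals dist_G(s,t), and let m be a vertex appearing on p whose level is maximal among the levels of the vertices appearing on p. Then m is an ancestor of s and an ancestor of t, and moreover d(s,m) = dist_G(s,m) and d(t,m) = dist_G(t,m). -/
namespace ISLabel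

variable {V : Type*}

/-- A vertex hierarchy of height `h ≥ 1` on the weighted graph `w 1`:
pairwise disjoint independent levels `L 1, …, L h` covering `V`, and graphs
`w i` supported on `V_i` obtained by the augmenting-edge construction. -/
structure VertexHierarchy (V : Type*) (h : ℕ) where
  L : ℕ → Set V
  w : ℕ → V → V → ℕ∞
  h_pos : 1 ≤ h
  wgraph : ∀ i, 1 ≤ i → i ≤ h → IsWGraph (w i)
  disj : ∀ i j, 1 ≤ i → i ≤ h → 1 ≤ j → j ≤ h → i ≠ j → ∀ v, v ∈ L i → v ∉ L j
  cover : ∀ v : V, ∃ i, 1 ≤ i ∧ i ≤ h ∧ v ∈ L i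
  supported : ∀ i, 1 ≤ i → i ≤ h → SupportedOn (w i) (VsetOf L i)
  aug : ∀ i, 2 ≤ i → i ≤ h → ∀ u v : V, u ≠ v → u ∈ VsetOf L i → v ∈ VsetOf L i →
    w i u v = min (w (i - 1) u v) (⨅ x ∈ L (i - 1), w (i - 1) u x + w (i - 1) x v)
  indep : ∀ i, 1 ≤ i → i ≤ h → IsIndep (w i) (L i)

/-- The level `ℓ(v)`: the unique `i` with `1 ≤ i ≤ h` and `v ∈ L i`. -/
noncomputable def level {h : ℕ} (H : VertexHierarchy V h) (v : V) : ℕ :=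
  sInf {i | 1 ≤ i ∧ i ≤ h ∧ v ∈ H.L i}

/-- One step of an ascending sequence: go to a strictly higher-level vertex that is
adjacent in the graph at the current vertex's level. -/
def AscStep {h : ℕ} (H : VertexHierarchy V h) (a b : V) : Prop :=
  level H a < level H b ∧ Adj (H.w (level H a)) a b

/-- `p` is an ascending sequence from `v` to `u`. -/
def IsAscending {h : ℕ} (H : VertexHierarchy V h) (v u : V) (p : List V) : Prop :=
  p ≠ [] ∧ p.head? = some v ∧ p.getLast? = some u ∧ p.Chain' (AscStep H)

/-- The set of ancestors of `v`. -/
def Anc {h : ℕ} (H : VertexHierarchy V h) (v : V) : Set V :=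
  {u | ∃ p, IsAscending H v u p}

/-- `d(v,u)`: the infimum of the lengths of ascending sequences from `v` to `u`,
where each step `a → b` costs `w (ℓ(a)) a b`; `⊤` if `u` is not an ancestor of `v`. -/
noncomputable def ancDist {h : ℕ} (H : VertexHierarchy V h) (v u : V) : ℕ∞ :=
  ⨅ p : {p : List V // IsAscending H v u p},
    pathLen (fun a b => H.w (level H a) a b) p.1

/-! ### Auxiliary lemmas -/

section Basics

@[simp] lemma List.chain'_singleton' {α : Type*} {R : α → α → Prop} (a : α) :
    List.Chain' R [a] := List.isChain_singleton a

@[simp] lemma List.chain'_cons {α : Type*} {R : α → α → Prop} {x y : α} {l : List α} :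
    List.Chain' R (x :: y :: l) ↔ R x y ∧ List.Chain' R (y :: l) := List.isChain_cons_cons

lemma List.chain'_append {α : Type*} {R : α → α → Prop} {l₁ l₂ : List α} :
    List.Chain' R (l₁ ++ l₂) ↔ List.Chain' R l₁ ∧ List.Chain' R l₂ ∧
      ∀ x ∈ l₁.getLast?, ∀ y ∈ l₂.head?, R x y := List.isChain_append

lemma List.chain'_reverse {α : Type*} {R : α → α → Prop} {l : List α} :
    List.Chain' R l.reverse ↔ List.Chain' (fun a b => R b a) l := List.isChain_reverse

lemma List.Chain'.imp {α : Type*} {R S : α → α → Prop} (H : ∀ a b, R a b → S a b)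
    {l : List α} (h : List.Chain' R l) : List.Chain' S l := List.IsChain.imp H h

lemma pathLen_singleton (f : V → V → ℕ∞) (a : V) : pathLen f [a] = 0 := by
  simp [pathLen]

lemma pathLen_cons_cons (f : V → V → ℕ∞) (a b : V) (l : List V) :
    pathLen f (a :: b :: l) = f a b + pathLen f (b :: l) := by
  simp [pathLen]

lemma pathLen_append (f : V → V → ℕ∞) (xs : List V) (y : V) (ys : List V) :
    pathLen f (xs ++ y :: ys) = pathLen f (xs ++ [y]) + pathLen f (y :: ys) := by
  induction xs with
  | nil => simp [pathLen_singleton]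
  | cons a xs ih =>
    cases xs with
    | nil => simp [pathLen_cons_cons, pathLen_singleton]
    | cons b xs' =>
      simp only [List.cons_append, pathLen_cons_cons] at *
      rw [ih, add_assoc]

lemma isWalk_singleton (w : V → V → ℕ∞) (v : V) : IsWalk w v v [v] :=
  ⟨by simp, by simp, by simp, by simp⟩

lemma wdist_le_pathLen {w : V → V → ℕ∞} {u v : V} {p : List V} (hp : IsWalk w u v p) :
    wdist w u v ≤ pathLen w p := iInf_le (fun q : {p : List V // IsWalk w u v p} => pathLen w q.1) ⟨p, hp⟩

lemma wdist_self (w : V → V → ℕ∞) (v : V) : wdist w v v = 0 :=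
  le_antisymm (by simpa [pathLen_singleton] using wdist_le_pathLen (isWalk_singleton w v))
    zero_le

lemma enat_iInf_attained {ι : Sort*} [Nonempty ι] (f : ι → ℕ∞) : ∃ i, f i = ⨅ j, f j := by
  obtain ⟨a, ⟨i, rfl⟩, hmin⟩ :=
    (wellFounded_lt (α := ℕ∞)).has_min (Set.range f) (Set.range_nonempty f)
  exact ⟨i, le_antisymm (le_iInf fun j => not_lt.1 (hmin _ ⟨j, rfl⟩)) (iInf_le _ i)⟩

lemma wdist_attained {w : V → V → ℕ∞} {u v : V} (h : wdist w u v ≠ ⊤) :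
    ∃ p, IsWalk w u v p ∧ pathLen w p = wdist w u v := by
  by_cases hne : Nonempty {p : List V // IsWalk w u v p}
  · obtain ⟨⟨p, hp⟩, he⟩ := enat_iInf_attained (fun p : {p // IsWalk w u v p} => pathLen w p.1)
    exact ⟨p, hp, he⟩
  · rw [not_nonempty_iff] at hne
    exact absurd (iInf_of_empty _) h

lemma isWalk_append {w : V → V → ℕ∞} {u v z : V} {p q : List V}
    (hp : IsWalk w u v p) (hq : IsWalk w v z q) :
    IsWalk w u z (p ++ q.tail) ∧ pathLen w (p ++ q.tail) = pathLen w p + pathLen w q := by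
  obtain ⟨hp0, hp1, hp2, hp3⟩ := hp
  obtain ⟨hq0, hq1, hq2, hq3⟩ := hq
  obtain ⟨q', rfl⟩ : ∃ q', q = v :: q' := by
    cases q with
    | nil => simp at hq0
    | cons a q' =>
      simp only [List.head?_cons, Option.some.injEq] at hq1
      exact ⟨q', by rw [hq1]⟩
  cases q' with
  | nil =>
    have hvz : v = z := by simpa using hq2
    subst hvz
    simpa [pathLen_singleton] using ⟨hp0, hp1, hp2, hp3⟩
  | cons b q'' =>
    obtain ⟨xs, rfl⟩ : ∃ xs, p = xs ++ [v] := List.getLast?_eq_some_iff.1 hp2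
    rw [List.getLast?_cons_cons] at hq2
    have hform : (xs ++ [v]) ++ (v :: b :: q'').tail = xs ++ v :: (b :: q'') := by simp
    have hwalk : IsWalk w u z (xs ++ v :: (b :: q'')) := by
      refine ⟨by simp, ?_, ?_, ?_⟩
      · rw [List.head?_append] at hp1 ⊢
        simpa using hp1
      · rw [List.getLast?_append]
        simpa using hq2
      · rw [List.chain'_append] at hp3 ⊢
        refine ⟨hp3.1, hq3, fun x hx y hy => ?_⟩
        simp only [List.head?_cons, Option.mem_def, Option.some.injEq] at hy
        subst hy
        exact hp3.2.2 x hx v (by simp)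
    rw [hform]
    exact ⟨hwalk, pathLen_append w xs v (b :: q'')⟩

lemma wdist_triangle (w : V → V → ℕ∞) (u v z : V) :
    wdist w u z ≤ wdist w u v + wdist w v z := by
  rcases eq_or_ne (wdist w u v) ⊤ with h | h
  · simp [h]
  rcases eq_or_ne (wdist w v z) ⊤ with h' | h'
  · simp [h']
  obtain ⟨p, hp, hpl⟩ := wdist_attained h
  obtain ⟨q, hq, hql⟩ := wdist_attained h'
  obtain ⟨hw, hl⟩ := isWalk_append hp hq
  calc wdist w u z ≤ pathLen w (p ++ q.tail) := wdist_le_pathLen hw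
    _ = _ := by rw [hl, hpl, hql]

lemma pathLen_reverse (f : V → V → ℕ∞) (hsym : ∀ a b, f a b = f b a) (p : List V) :
    pathLen f p.reverse = pathLen f p := by
  induction p with
  | nil => simp [pathLen]
  | cons a l ih =>
    cases l with
    | nil => simp [pathLen]
    | cons b l' =>
      have hform : (a :: b :: l').reverse = l'.reverse ++ b :: [a] := by simp
      rw [hform, pathLen_append]
      have : l'.reverse ++ [b] = (b :: l').reverse := by simp
      rw [this, ih, pathLen_cons_cons, pathLen_cons_cons, pathLen_singleton, add_zero,
        hsym b a, add_comm]

lemma isWalk_reverse {w : V → V → ℕ∞} (hsym : ∀ a b, w a b = w b a) {u v : V} {p : List V}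
    (hp : IsWalk w u v p) : IsWalk w v u p.reverse := by
  obtain ⟨h0, h1, h2, h3⟩ := hp
  refine ⟨by simpa using h0, by simpa using h2, by simpa using h1, ?_⟩
  rw [List.chain'_reverse]
  exact h3.imp fun a b hab => ⟨hab.1.symm, by rw [show w b a = w a b from hsym b a]; exact hab.2⟩

lemma wdist_comm {w : V → V → ℕ∞} (hsym : ∀ a b, w a b = w b a) (u v : V) :
    wdist w u v = wdist w v u := by
  have key : ∀ a b : V, wdist w a b ≤ wdist w b a := by
    intro a b
    rcases eq_or_ne (wdist w b a) ⊤ with h | h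
    · simp [h]
    obtain ⟨p, hp, hl⟩ := wdist_attained h
    calc wdist w a b ≤ pathLen w p.reverse := wdist_le_pathLen (isWalk_reverse hsym hp)
      _ = wdist w b a := by rw [pathLen_reverse w hsym, hl]
  exact le_antisymm (key u v) (key v u)

lemma wdist_le_pathLen_of_ge {w g : V → V → ℕ∞} (hg : ∀ a b, wdist w a b ≤ g a b) :
    ∀ (p : List V) (u v : V), p.head? = some u → p.getLast? = some v →
      wdist w u v ≤ pathLen g p := by
  intro p
  induction p with
  | nil => simp
  | cons a l ih =>
    intro u v h1 h2
    obtain rfl : a = u := by simpa using h1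
    cases l with
    | nil =>
      obtain rfl : a = v := by simpa using h2
      simp [wdist_self, pathLen_singleton]
    | cons b l' =>
      rw [List.getLast?_cons_cons] at h2
      calc wdist w a v ≤ wdist w a b + wdist w b v := wdist_triangle w a b v
        _ ≤ g a b + pathLen g (b :: l') := add_le_add (hg a b) (ih b v rfl h2)
        _ = pathLen g (a :: b :: l') := (pathLen_cons_cons g a b l').symm

end Basics
section Hierarchy

variable {h : ℕ}

lemma level_mem (H : VertexHierarchy V h) (v : V) :
    1 ≤ level H v ∧ level H v ≤ h ∧ v ∈ H.L (level H v) := by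
  have hne : {i | 1 ≤ i ∧ i ≤ h ∧ v ∈ H.L i}.Nonempty := H.cover v
  exact Nat.sInf_mem hne

lemma level_eq_of_mem (H : VertexHierarchy V h) {v : V} {i : ℕ}
    (h1 : 1 ≤ i) (h2 : i ≤ h) (h3 : v ∈ H.L i) : level H v = i := by
  by_contra hne
  obtain ⟨l1, l2, l3⟩ := level_mem H v
  exact H.disj _ _ l1 l2 h1 h2 hne v l3 h3

lemma mem_VsetOf_iff (H : VertexHierarchy V h) {v : V} {i : ℕ} :
    v ∈ VsetOf H.L i ↔ i ≤ level H v := by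
  obtain ⟨l1, l2, l3⟩ := level_mem H v
  constructor
  · intro hv
    by_contra hlt
    exact hv (level H v) l1 (by omega) l3
  · intro hle j hj1 hj2 hjmem
    have : level H v = j := level_eq_of_mem H hj1 (by omega) hjmem
    omega

lemma not_mem_L_of_level_ne (H : VertexHierarchy V h) {v : V} {i : ℕ}
    (h1 : 1 ≤ i) (h2 : i ≤ h) (hne : level H v ≠ i) : v ∉ H.L i :=
  fun hmem => hne (level_eq_of_mem H h1 h2 hmem)

lemma wdist_le_w (H : VertexHierarchy V h) :
    ∀ i, 1 ≤ i → i ≤ h → ∀ u v : V, wdist (H.w 1) u v ≤ H.w i u v := by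
  intro i
  induction i with
  | zero => omega
  | succ n ih =>
    intro h1 h2 u v
    rcases eq_or_ne u v with rfl | huv
    · simp [wdist_self]
    rcases Nat.eq_or_lt_of_le h1 with he | hlt
    · obtain rfl : n = 0 := by omega
      rcases eq_or_ne (H.w 1 u v) ⊤ with ht | ht
      · simp [ht]
      have hadj : Adj (H.w 1) u v := ⟨huv, lt_top_iff_ne_top.2 ht⟩
      have hw : IsWalk (H.w 1) u v [u, v] := ⟨by simp, by simp, by simp, by simp [hadj]⟩
      calc wdist (H.w 1) u v ≤ pathLen (H.w 1) [u, v] := wdist_le_pathLen hw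
        _ = H.w 1 u v := by rw [pathLen_cons_cons, pathLen_singleton, add_zero]
    · have hn1 : 1 ≤ n := by omega
      by_cases hmem : u ∈ VsetOf H.L (n + 1) ∧ v ∈ VsetOf H.L (n + 1)
      · have haug := H.aug (n + 1) (by omega) h2 u v huv hmem.1 hmem.2
        simp only [Nat.add_sub_cancel] at haug
        rw [haug]
        refine le_min (ih hn1 (by omega) u v) (le_iInf₂ fun x hx => ?_)
        calc wdist (H.w 1) u v ≤ wdist (H.w 1) u x + wdist (H.w 1) x v :=
              wdist_triangle (H.w 1) u x v
          _ ≤ _ := add_le_add (ih hn1 (by omega) u x) (ih hn1 (by omega) x v)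
      · rw [H.supported (n + 1) h1 h2 u v (by tauto)]
        exact le_top

end Hierarchy
section Elim

variable {h : ℕ}

lemma mem_VsetOf_succ_s9 (H : VertexHierarchy V h) {i : ℕ} {x : V}
    (hx : x ∈ VsetOf H.L i) (hxL : x ∉ H.L i) : x ∈ VsetOf H.L (i + 1) := by
  rw [mem_VsetOf_iff H] at hx ⊢
  have : level H x ≠ i := fun he => hxL (he ▸ (level_mem H x).2.2)
  omega

theorem elim_level (H : VertexHierarchy V h) (i : ℕ) (hi1 : 1 ≤ i) (hi2 : i + 1 ≤ h) :
    ∀ (n : ℕ) (q : List V) (c m : V), q.length = n →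
    IsWalk (H.w i) c m q → (∀ x ∈ q, x ∈ VsetOf H.L i) →
    c ∉ H.L i → m ∉ H.L i →
    ∃ q', IsWalk (H.w (i + 1)) c m q' ∧ (∀ x ∈ q', x ∈ q ∧ x ∉ H.L i) ∧
      pathLen (H.w (i + 1)) q' ≤ pathLen (H.w i) q := by
  intro n
  induction n using Nat.strong_induction_on with
  | _ n IH =>
  intro q c m hlenq hq hV hc hm
  obtain ⟨hq0, hq1, hq2, hq3⟩ := hq
  obtain ⟨rest, rfl⟩ : ∃ rest, q = c :: rest := by
    cases q with
    | nil => simp at hq0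
    | cons a rest =>
      obtain rfl : a = c := by simpa using hq1
      exact ⟨rest, rfl⟩
  cases rest with
  | nil =>
    obtain rfl : c = m := by simpa using hq2
    exact ⟨[c], ⟨by simp, by simp, by simp, by simp⟩, by simp [hc],
      by simp [pathLen_singleton]⟩
  | cons y rest2 =>
    have hadj1 : Adj (H.w i) c y := (List.chain'_cons.1 hq3).1
    have hchain2 : List.Chain' (Adj (H.w i)) (y :: rest2) := (List.chain'_cons.1 hq3).2
    by_cases hy : y ∈ H.L i
    · cases rest2 with
      | nil =>
        exfalso
        rw [List.getLast?_cons_cons] at hq2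
        obtain rfl : y = m := by simpa using hq2
        exact hm hy
      | cons b rest3 =>
        have hadj2 : Adj (H.w i) y b := (List.chain'_cons.1 hchain2).1
        have hb : b ∉ H.L i := fun hbL => H.indep i hi1 (by omega) y hy b hbL hadj2
        have hq2' : (b :: rest3).getLast? = some m := by
          rw [List.getLast?_cons_cons, List.getLast?_cons_cons] at hq2
          exact hq2
        have hwalkb : IsWalk (H.w i) b m (b :: rest3) :=
          ⟨by simp, by simp, hq2', hchain2.tail⟩
        have hVb : ∀ x ∈ b :: rest3, x ∈ VsetOf H.L i := fun x hx => hV x (by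
          simp only [List.mem_cons] at hx ⊢
          tauto)
        by_cases hcb : c = b
        · subst hcb
          obtain ⟨q', hw', hsub', hlen'⟩ :=
            IH (c :: rest3).length (by subst hlenq; simp only [List.length_cons]; omega) (c :: rest3) c m rfl hwalkb hVb hc hm
          refine ⟨q', hw', fun x hx => ⟨?_, (hsub' x hx).2⟩, ?_⟩
          · have := (hsub' x hx).1
            simp only [List.mem_cons] at this ⊢
            tauto
          · calc pathLen (H.w (i + 1)) q' ≤ pathLen (H.w i) (c :: rest3) := hlen'
              _ ≤ H.w i y c + pathLen (H.w i) (c :: rest3) := le_add_self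
              _ ≤ H.w i c y + (H.w i y c + pathLen (H.w i) (c :: rest3)) := le_add_self
              _ = pathLen (H.w i) (c :: y :: c :: rest3) := by
                  rw [pathLen_cons_cons, pathLen_cons_cons]
        · obtain ⟨q', hw', hsub', hlen'⟩ :=
            IH (b :: rest3).length (by subst hlenq; simp only [List.length_cons]; omega) (b :: rest3) b m rfl hwalkb hVb hb hm
          have hcV : c ∈ VsetOf H.L (i + 1) := mem_VsetOf_succ_s9 H (hV c (by simp)) hc
          have hbV : b ∈ VsetOf H.L (i + 1) := mem_VsetOf_succ_s9 H (hVb b (by simp)) hb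
          have hshort : H.w (i + 1) c b ≤ H.w i c y + H.w i y b := by
            have haug := H.aug (i + 1) (by omega) hi2 c b hcb hcV hbV
            simp only [Nat.add_sub_cancel] at haug
            rw [haug]
            exact le_trans (min_le_right _ _) (iInf₂_le y hy)
          have hadjcb : Adj (H.w (i + 1)) c b :=
            ⟨hcb, lt_of_le_of_lt hshort (ENat.add_lt_top.2 ⟨hadj1.2, hadj2.2⟩)⟩
          obtain ⟨hw0, hw1, hw2, hw3⟩ := hw'
          obtain ⟨q'', rfl⟩ : ∃ q'', q' = b :: q'' := by
            cases q' with
            | nil => simp at hw0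
            | cons a q'' =>
              obtain rfl : a = b := by simpa using hw1
              exact ⟨q'', rfl⟩
          refine ⟨c :: b :: q'', ⟨by simp, by simp, ?_, List.chain'_cons.2 ⟨hadjcb, hw3⟩⟩,
            ?_, ?_⟩
          · rw [List.getLast?_cons_cons]
            exact hw2
          · intro x hx
            rcases List.mem_cons.1 hx with rfl | hx'
            · exact ⟨by simp, hc⟩
            · obtain ⟨hmem, hnL⟩ := hsub' x hx'
              simp only [List.mem_cons] at hmem ⊢
              exact ⟨by tauto, hnL⟩
          · rw [pathLen_cons_cons, pathLen_cons_cons, pathLen_cons_cons, ← add_assoc]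
            exact add_le_add hshort hlen'
    · have hwalky : IsWalk (H.w i) y m (y :: rest2) := by
        rw [List.getLast?_cons_cons] at hq2
        exact ⟨by simp, by simp, hq2, hchain2⟩
      obtain ⟨q', hw', hsub', hlen'⟩ :=
        IH (y :: rest2).length (by subst hlenq; simp only [List.length_cons]; omega) (y :: rest2) y m rfl hwalky
          (fun x hx => hV x (by simp only [List.mem_cons] at hx ⊢; tauto)) hy hm
      have hcV : c ∈ VsetOf H.L (i + 1) := mem_VsetOf_succ_s9 H (hV c (by simp)) hc
      have hyV : y ∈ VsetOf H.L (i + 1) := mem_VsetOf_succ_s9 H (hV y (by simp)) hy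
      have hshort : H.w (i + 1) c y ≤ H.w i c y := by
        have haug := H.aug (i + 1) (by omega) hi2 c y hadj1.1 hcV hyV
        simp only [Nat.add_sub_cancel] at haug
        rw [haug]
        exact min_le_left _ _
      have hadjcy : Adj (H.w (i + 1)) c y := ⟨hadj1.1, lt_of_le_of_lt hshort hadj1.2⟩
      obtain ⟨hw0, hw1, hw2, hw3⟩ := hw'
      obtain ⟨q'', rfl⟩ : ∃ q'', q' = y :: q'' := by
        cases q' with
        | nil => simp at hw0
        | cons a q'' =>
          obtain rfl : a = y := by simpa using hw1
          exact ⟨q'', rfl⟩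
      refine ⟨c :: y :: q'', ⟨by simp, by simp, ?_, List.chain'_cons.2 ⟨hadjcy, hw3⟩⟩, ?_, ?_⟩
      · rw [List.getLast?_cons_cons]
        exact hw2
      · intro x hx
        rcases List.mem_cons.1 hx with rfl | hx'
        · exact ⟨by simp, hc⟩
        · obtain ⟨hmem, hnL⟩ := hsub' x hx'
          simp only [List.mem_cons] at hmem ⊢
          exact ⟨by tauto, hnL⟩
      · rw [pathLen_cons_cons, pathLen_cons_cons]
        exact add_le_add hshort hlen'

end Elim
section Core

variable {h : ℕ}

theorem core (H : VertexHierarchy V h) (m : V) :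
    ∀ (k n i : ℕ) (q : List V) (c : V), h - i = k → q.length = n →
    1 ≤ i → i ≤ level H m → level H m ≤ h →
    IsWalk (H.w i) c m q → (∀ x ∈ q, x ∈ VsetOf H.L i) →
    (∀ x ∈ q, level H x ≤ level H m) →
    ∃ r, IsAscending H c m r ∧
      pathLen (fun a b => H.w (level H a) a b) r ≤ pathLen (H.w i) q := by
  intro k
  induction k using Nat.strong_induction_on with
  | _ k IHk =>
  intro n
  induction n using Nat.strong_induction_on with
  | _ n IHn =>
  intro i q c hk hn hi1 him hmh hq hV hlev
  obtain ⟨hq0, hq1, hq2, hq3⟩ := hq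
  obtain ⟨rest, rfl⟩ : ∃ rest, q = c :: rest := by
    cases q with
    | nil => simp at hq0
    | cons a rest =>
      obtain rfl : a = c := by simpa using hq1
      exact ⟨rest, rfl⟩
  by_cases hcm : c = m
  · subst hcm
    exact ⟨[c], ⟨by simp, by simp, by simp, by simp⟩, by
      rw [pathLen_singleton]; exact zero_le⟩
  · cases rest with
    | nil =>
      obtain rfl : c = m := by simpa using hq2
      exact absurd rfl hcm
    | cons a rest' =>
      have hadj : Adj (H.w i) c a := (List.chain'_cons.1 hq3).1
      have hih : i ≤ h := le_trans him hmh
      by_cases hlc : level H c = i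
      · -- ascend from c to a
        have hcL : c ∈ H.L i := hlc ▸ (level_mem H c).2.2
        have haL : a ∉ H.L i := fun haL => H.indep i hi1 hih c hcL a haL hadj
        have haV : a ∈ VsetOf H.L i := hV a (by simp)
        have hla : level H c < level H a := by
          have h1 := (mem_VsetOf_iff H).1 haV
          have h2 : level H a ≠ i := fun he => haL (he ▸ (level_mem H a).2.2)
          omega
        have hstep : AscStep H c a := ⟨hla, by rw [hlc]; exact hadj⟩
        have hwalk' : IsWalk (H.w i) a m (a :: rest') :=
          ⟨by simp, by simp, by rw [List.getLast?_cons_cons] at hq2; exact hq2,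
            (List.chain'_cons.1 hq3).2⟩
        obtain ⟨r', hr', hlen'⟩ :=
          IHn (a :: rest').length (by subst hn; simp only [List.length_cons]; omega)
            i (a :: rest') a hk rfl hi1 him hmh hwalk'
            (fun x hx => hV x (by simp only [List.mem_cons] at hx ⊢; tauto))
            (fun x hx => hlev x (by simp only [List.mem_cons] at hx ⊢; tauto))
        obtain ⟨hr0, hr1, hr2, hr3⟩ := hr'
        obtain ⟨r'', rfl⟩ : ∃ r'', r' = a :: r'' := by
          cases r' with
          | nil => simp at hr0
          | cons x r'' =>
            obtain rfl : x = a := by simpa using hr1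
            exact ⟨r'', rfl⟩
        refine ⟨c :: a :: r'', ⟨by simp, by simp, ?_, List.chain'_cons.2 ⟨hstep, hr3⟩⟩, ?_⟩
        · rw [List.getLast?_cons_cons]
          exact hr2
        · rw [pathLen_cons_cons, pathLen_cons_cons, hlc]
          exact add_le_add le_rfl hlen'
      · -- pass to level i + 1
        have hci : i ≤ level H c := (mem_VsetOf_iff H).1 (hV c (by simp))
        have hlci : i < level H c := lt_of_le_of_ne hci (Ne.symm hlc)
        have hlm : i < level H m := lt_of_lt_of_le hlci (hlev c (by simp))
        have hi2 : i + 1 ≤ h := by omega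
        have hcL : c ∉ H.L i := not_mem_L_of_level_ne H hi1 hih (by omega)
        have hmL : m ∉ H.L i := not_mem_L_of_level_ne H hi1 hih (by omega)
        obtain ⟨q', hw', hsub', hplen⟩ :=
          elim_level H i hi1 hi2 (c :: a :: rest').length (c :: a :: rest') c m rfl
            ⟨hq0, hq1, hq2, hq3⟩ hV hcL hmL
        obtain ⟨r, hr, hrlen⟩ :=
          IHk (h - (i + 1)) (by omega) q'.length (i + 1) q' c rfl rfl (by omega)
            (by omega) hmh hw'
            (fun x hx => mem_VsetOf_succ_s9 H (hV x (hsub' x hx).1) (hsub' x hx).2)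
            (fun x hx => hlev x (hsub' x hx).1)
        exact ⟨r, hr, le_trans hrlen hplen⟩

theorem core' (H : VertexHierarchy V h) {m : V} {i : ℕ} {q : List V} {c : V}
    (hi1 : 1 ≤ i) (him : i ≤ level H m) (hmh : level H m ≤ h)
    (hq : IsWalk (H.w i) c m q) (hV : ∀ x ∈ q, x ∈ VsetOf H.L i)
    (hlev : ∀ x ∈ q, level H x ≤ level H m) :
    ∃ r, IsAscending H c m r ∧
      pathLen (fun a b => H.w (level H a) a b) r ≤ pathLen (H.w i) q :=
  core H m (h - i) q.length i q c rfl rfl hi1 him hmh hq hV hlev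

end Core
/-- the max-level vertex of a shortest walk is a common ancestor of
the endpoints, and the label distances to it are exact. -/
theorem maxLevel_vertex_common_ancestor [Fintype V] {h : ℕ}
    (H : VertexHierarchy V h) (s t : V) (hst : wdist (H.w 1) s t < ⊤)
    (p : List V) (hp : IsWalk (H.w 1) s t p)
    (hlen : pathLen (H.w 1) p = wdist (H.w 1) s t)
    (m : V) (hm : m ∈ p) (hmax : ∀ u ∈ p, level H u ≤ level H m) :
    m ∈ Anc H s ∧ m ∈ Anc H t ∧
      ancDist H s m = wdist (H.w 1) s m ∧ ancDist H t m = wdist (H.w 1) t m := by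
  have hsym1 : ∀ a b : V, H.w 1 a b = H.w 1 b a := (H.wgraph 1 le_rfl H.h_pos).1
  have hg : ∀ a b : V, wdist (H.w 1) a b ≤ H.w (level H a) a b := fun a b =>
    wdist_le_w H (level H a) (level_mem H a).1 (level_mem H a).2.1 a b
  obtain ⟨p₁, p₂, rfl⟩ := List.append_of_mem hm
  obtain ⟨hp0, hp1, hp2, hp3⟩ := hp
  have hchain := List.chain'_append.1 hp3
  have hq₁ : IsWalk (H.w 1) s m (p₁ ++ [m]) := by
    refine ⟨by simp, ?_, by simp, ?_⟩
    · rw [List.head?_append] at hp1 ⊢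
      simpa using hp1
    · rw [List.chain'_append]
      refine ⟨hchain.1, by simp, fun x hx y hy => ?_⟩
      obtain rfl : m = y := by simpa using hy
      exact hchain.2.2 x hx m (by simp)
  have hq₂ : IsWalk (H.w 1) m t (m :: p₂) := by
    refine ⟨by simp, by simp, ?_, hchain.2.1⟩
    rw [List.getLast?_append] at hp2
    cases hml : (m :: p₂).getLast? with
    | none =>
      rw [List.getLast?_eq_none_iff] at hml
      simp at hml
    | some z =>
      rw [hml] at hp2
      obtain rfl : z = t := by simpa using hp2
      rfl
  have hsplit : pathLen (H.w 1) (p₁ ++ m :: p₂) =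
      pathLen (H.w 1) (p₁ ++ [m]) + pathLen (H.w 1) (m :: p₂) := pathLen_append _ p₁ m p₂
  have hA : wdist (H.w 1) s m ≤ pathLen (H.w 1) (p₁ ++ [m]) := wdist_le_pathLen hq₁
  have hB : wdist (H.w 1) m t ≤ pathLen (H.w 1) (m :: p₂) := wdist_le_pathLen hq₂
  have htri : wdist (H.w 1) s t ≤ wdist (H.w 1) s m + wdist (H.w 1) m t :=
    wdist_triangle _ s m t
  have hEq : pathLen (H.w 1) (p₁ ++ [m]) + pathLen (H.w 1) (m :: p₂) = wdist (H.w 1) s t := by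
    rw [← hsplit, hlen]
  have hfin : pathLen (H.w 1) (p₁ ++ [m]) + pathLen (H.w 1) (m :: p₂) < ⊤ := hEq ▸ hst
  have hq₁top : pathLen (H.w 1) (p₁ ++ [m]) ≠ ⊤ := (ENat.add_lt_top.1 hfin).1.ne
  have hq₂top : pathLen (H.w 1) (m :: p₂) ≠ ⊤ := (ENat.add_lt_top.1 hfin).2.ne
  have key1 : pathLen (H.w 1) (p₁ ++ [m]) = wdist (H.w 1) s m := by
    refine le_antisymm ?_ hA
    have h1 : pathLen (H.w 1) (p₁ ++ [m]) + pathLen (H.w 1) (m :: p₂) ≤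
        wdist (H.w 1) s m + pathLen (H.w 1) (m :: p₂) :=
      hEq.le.trans (htri.trans (add_le_add le_rfl hB))
    exact (WithTop.add_le_add_iff_right hq₂top).1 h1
  have key2 : pathLen (H.w 1) (m :: p₂) = wdist (H.w 1) m t := by
    refine le_antisymm ?_ hB
    have h1 : pathLen (H.w 1) (p₁ ++ [m]) + pathLen (H.w 1) (m :: p₂) ≤
        pathLen (H.w 1) (p₁ ++ [m]) + wdist (H.w 1) m t :=
      hEq.le.trans (htri.trans (add_le_add hA le_rfl))
    exact (WithTop.add_le_add_iff_left hq₁top).1 h1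
  have hm1 : 1 ≤ level H m := (level_mem H m).1
  have hmh : level H m ≤ h := (level_mem H m).2.1
  obtain ⟨r₁, hr₁, hrl₁⟩ := core' H le_rfl hm1 hmh hq₁
    (fun x _ => (mem_VsetOf_iff H).2 (level_mem H x).1)
    (fun x hx => hmax x (by simp only [List.mem_append, List.mem_cons] at hx ⊢; tauto))
  have hq₂r : IsWalk (H.w 1) t m (m :: p₂).reverse := isWalk_reverse hsym1 hq₂
  obtain ⟨r₂, hr₂, hrl₂⟩ := core' H le_rfl hm1 hmh hq₂r
    (fun x _ => (mem_VsetOf_iff H).2 (level_mem H x).1)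
    (fun x hx => hmax x (by
      rw [List.mem_reverse] at hx
      simp only [List.mem_append, List.mem_cons] at hx ⊢
      tauto))
  have lower : ∀ (u : V) (r' : List V), IsAscending H u m r' →
      wdist (H.w 1) u m ≤ pathLen (fun a b => H.w (level H a) a b) r' := fun u r' hr' =>
    wdist_le_pathLen_of_ge hg r' u m hr'.2.1 hr'.2.2.1
  refine ⟨⟨r₁, hr₁⟩, ⟨r₂, hr₂⟩, ?_, ?_⟩
  · refine le_antisymm ?_ (le_iInf fun r' => lower s r'.1 r'.2)
    calc ancDist H s m ≤ pathLen (fun a b => H.w (level H a) a b) r₁ :=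
          iInf_le (fun q : {p : List V // IsAscending H s m p} =>
            pathLen (fun a b => H.w (level H a) a b) q.1) ⟨r₁, hr₁⟩
      _ ≤ pathLen (H.w 1) (p₁ ++ [m]) := hrl₁
      _ = wdist (H.w 1) s m := key1
  · refine le_antisymm ?_ (le_iInf fun r' => lower t r'.1 r'.2)
    calc ancDist H t m ≤ pathLen (fun a b => H.w (level H a) a b) r₂ :=
          iInf_le (fun q : {p : List V // IsAscending H t m p} =>
            pathLen (fun a b => H.w (level H a) a b) q.1) ⟨r₂, hr₂⟩
      _ ≤ pathLen (H.w 1) (m :: p₂).reverse := hrl₂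
      _ = pathLen (H.w 1) (m :: p₂) := pathLen_reverse _ hsym1 _
      _ = wdist (H.w 1) m t := key2
      _ = wdist (H.w 1) t m := wdist_comm hsym1 m t

end ISLabel
end
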